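/- Let ψ be an integrable real random variable, and let ξ₁ and ξ₂ be integrable real random variables, each independent of ψ, such that E[ξ₁] = E[ξ₂] and the cdf F_{ξ₁} dominates the cdf F_{ξ₂} at the second order. Then for every y ∈ ℝ, E[(y − ψ − ξ₂)⁺] ≥ E[(y − ψ − ξ₁)⁺]. -/
import Mathlib


open MeasureTheory ProbabilityTheory
open scoped ENNReal

/-- A cdf `F` dominates a cdf `G` at the second order if
`∫_{-∞}^t F(s) ds ≤ ∫_{-∞}^t G(s) ds` for all `t`. Here stated for the laws `μ` and `ν`. -/
def SecondOrderDom (μ ν : Measure ℝ) : Prop :=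
  ∀ t : ℝ, ∫ s in Set.Iic t, cdf μ s ≤ ∫ s in Set.Iic t, cdf ν s

lemma ofReal_max_zero (a : ℝ) : ENNReal.ofReal (max a 0) = ENNReal.ofReal a := by
  rcases le_total a 0 with h | h
  · rw [max_eq_right h, ENNReal.ofReal_zero, eq_comm, ENNReal.ofReal_eq_zero]; exact h
  · rw [max_eq_left h]

lemma key_lintegral (μ : Measure ℝ) [IsProbabilityMeasure μ] (c : ℝ) :
    ∫⁻ s in Set.Iic c, μ (Set.Iic s) = ∫⁻ x, ENNReal.ofReal (c - x) ∂μ := by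
  set F : ℝ → ℝ → ℝ≥0∞ := fun s x => {p : ℝ × ℝ | p.2 ≤ p.1}.indicator 1 (s, x) with hF
  have hset : MeasurableSet {p : ℝ × ℝ | p.2 ≤ p.1} :=
    measurableSet_le measurable_snd measurable_fst
  have hmeas : AEMeasurable (Function.uncurry F) ((volume.restrict (Set.Iic c)).prod μ) := by
    have h : Function.uncurry F = {p : ℝ × ℝ | p.2 ≤ p.1}.indicator 1 := rfl
    rw [h]
    exact (measurable_one.indicator hset).aemeasurable
  have hswap := lintegral_lintegral_swap (μ := volume.restrict (Set.Iic c)) (ν := μ) hmeas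
  have h1 : ∀ s : ℝ, ∫⁻ x, F s x ∂μ = μ (Set.Iic s) := by
    intro s
    have h : ∀ x, F s x = (Set.Iic s).indicator (1 : ℝ → ℝ≥0∞) x := by
      intro x
      simp only [hF, Set.indicator_apply, Set.mem_setOf_eq, Set.mem_Iic, Pi.one_apply]
    rw [lintegral_congr h, lintegral_indicator_one measurableSet_Iic]
  have h2 : ∀ x : ℝ, (∫⁻ s in Set.Iic c, F s x) = ENNReal.ofReal (c - x) := by
    intro x
    have h : ∀ s, F s x = (Set.Ici x).indicator (1 : ℝ → ℝ≥0∞) s := by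
      intro s
      simp only [hF, Set.indicator_apply, Set.mem_setOf_eq, Set.mem_Ici, Pi.one_apply]
    rw [lintegral_congr h, lintegral_indicator_one measurableSet_Ici,
      Measure.restrict_apply measurableSet_Ici, Set.Ici_inter_Iic, Real.volume_Icc]
  calc ∫⁻ s in Set.Iic c, μ (Set.Iic s)
      = ∫⁻ s in Set.Iic c, ∫⁻ x, F s x ∂μ := lintegral_congr fun s => (h1 s).symm
    _ = ∫⁻ x, (∫⁻ s in Set.Iic c, F s x) ∂μ := hswap
    _ = ∫⁻ x, ENNReal.ofReal (c - x) ∂μ := lintegral_congr h2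

lemma key_eq (μ : Measure ℝ) [IsProbabilityMeasure μ] (c : ℝ) :
    ∫ x, max (c - x) 0 ∂μ = ∫ s in Set.Iic c, cdf μ s := by
  have hL := integral_eq_lintegral_of_nonneg_ae (μ := μ) (f := fun x => max (c - x) 0)
    (ae_of_all _ fun x => le_max_right _ _) (Continuous.aestronglyMeasurable (by continuity))
  have hR := integral_eq_lintegral_of_nonneg_ae (μ := volume.restrict (Set.Iic c))
    (f := fun s => cdf μ s) (ae_of_all _ fun s => cdf_nonneg μ s)
    ((monotone_cdf μ).measurable.aestronglyMeasurable)
  rw [hL, hR]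
  congr 1
  have h1 : ∫⁻ x, ENNReal.ofReal (max (c - x) 0) ∂μ = ∫⁻ x, ENNReal.ofReal (c - x) ∂μ :=
    lintegral_congr fun x => ofReal_max_zero _
  have h2 : ∫⁻ s in Set.Iic c, ENNReal.ofReal (cdf μ s) = ∫⁻ s in Set.Iic c, μ (Set.Iic s) :=
    lintegral_congr fun s => ofReal_cdf μ s
  rw [h1, h2, key_lintegral]

/-- If `ξ₁, ξ₂` are integrable, each independent of `ψ`, with `E[ξ₁] = E[ξ₂]` and `F_{ξ₁}`
dominating `F_{ξ₂}` at the second order, then for every `y`,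
`E[(y - ψ - ξ₂)⁺] ≥ E[(y - ψ - ξ₁)⁺]`. -/
theorem pos_part_expectation_mono_of_secondOrderDom
    {Ω : Type*} [MeasurableSpace Ω] (P : Measure Ω) [IsProbabilityMeasure P]
    {ψ ξ₁ ξ₂ : Ω → ℝ}
    (hψm : Measurable ψ) (hξ₁m : Measurable ξ₁) (hξ₂m : Measurable ξ₂)
    (hψi : Integrable ψ P) (hξ₁i : Integrable ξ₁ P) (hξ₂i : Integrable ξ₂ P)
    (hξ₁indep : IndepFun ξ₁ ψ P) (hξ₂indep : IndepFun ξ₂ ψ P)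
    (hmean : ∫ ω, ξ₁ ω ∂P = ∫ ω, ξ₂ ω ∂P)
    (hdom : SecondOrderDom (P.map ξ₁) (P.map ξ₂)) :
    ∀ y : ℝ, ∫ ω, max (y - ψ ω - ξ₁ ω) 0 ∂P ≤ ∫ ω, max (y - ψ ω - ξ₂ ω) 0 ∂P := by
  intro y
  haveI := Measure.isProbabilityMeasure_map hψm.aemeasurable (μ := P)
  have key : ∀ (ξ : Ω → ℝ), Measurable ξ → Integrable ξ P → IndepFun ξ ψ P →
      (∫ ω, max (y - ψ ω - ξ ω) 0 ∂P
        = ∫ a, (∫ s in Set.Iic (y - a), cdf (P.map ξ) s) ∂(P.map ψ)) ∧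
      Integrable (fun a => ∫ s in Set.Iic (y - a), cdf (P.map ξ) s) (P.map ψ) := by
    intro ξ hξm hξi hindep
    haveI := Measure.isProbabilityMeasure_map hξm.aemeasurable (μ := P)
    have hmap : P.map (fun ω => (ψ ω, ξ ω)) = (P.map ψ).prod (P.map ξ) :=
      (indepFun_iff_map_prod_eq_prod_map_map hψm.aemeasurable hξm.aemeasurable).mp hindep.symm
    set f : ℝ × ℝ → ℝ := fun p => max (y - p.1 - p.2) 0 with hf
    have hfc : Continuous f := by
      apply Continuous.max _ continuous_const
      exact (continuous_const.sub continuous_fst).sub continuous_snd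
    have hint : Integrable f ((P.map ψ).prod (P.map ξ)) := by
      rw [← hmap,
        integrable_map_measure hfc.aestronglyMeasurable (hψm.prodMk hξm).aemeasurable]
      exact (((integrable_const y).sub hψi).sub hξi).pos_part
    have h3 : ∀ a : ℝ, ∫ b, f (a, b) ∂(P.map ξ) = ∫ s in Set.Iic (y - a), cdf (P.map ξ) s := by
      intro a
      have := key_eq (P.map ξ) (y - a)
      simpa [hf, sub_sub] using this
    have h1 : ∫ ω, max (y - ψ ω - ξ ω) 0 ∂P
        = ∫ a, (∫ s in Set.Iic (y - a), cdf (P.map ξ) s) ∂(P.map ψ) := by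
      calc ∫ ω, max (y - ψ ω - ξ ω) 0 ∂P
          = ∫ p, f p ∂((P.map ψ).prod (P.map ξ)) := by
            rw [← hmap, integral_map (hψm.prodMk hξm).aemeasurable hfc.aestronglyMeasurable]
        _ = ∫ a, ∫ b, f (a, b) ∂(P.map ξ) ∂(P.map ψ) := integral_prod f hint
        _ = ∫ a, (∫ s in Set.Iic (y - a), cdf (P.map ξ) s) ∂(P.map ψ) :=
            integral_congr_ae (ae_of_all _ fun a => h3 a)
    exact ⟨h1, hint.integral_prod_left.congr (ae_of_all _ fun a => h3 a)⟩
  obtain ⟨e1, i1⟩ := key ξ₁ hξ₁m hξ₁i hξ₁indep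
  obtain ⟨e2, i2⟩ := key ξ₂ hξ₂m hξ₂i hξ₂indep
  rw [e1, e2]
  exact integral_mono i1 i2 fun a => hdom (y - a)
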